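/- arXiv:1805.09388 — 3 statements merged into one kernel-verified Lean document; each statement's English description precedes it below -/
import Mathlib

section
/- Let Σ be an n×n positive definite real matrix, K a real p×n matrix, and σ_u ∈ ℝ. Then the minimum eigenvalue of the block matrix [[Σ, Σ Kᵀ], [K Σ, K Σ Kᵀ + σ_u² I_p]] is at least σ_u² · min{ 1/2, λ_min(Σ) / (2‖K Σ Kᵀ‖ + σ_u²) }. -/
open Matrix
open scoped Matrix.Norms.L2Operator
open RealInnerProductSpace

lemma aux_dot_self_nonneg {n : ℕ} (v : Fin n → ℝ) : 0 ≤ v ⬝ᵥ v :=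
  Finset.sum_nonneg fun i _ => mul_self_nonneg _

lemma aux_cs {n : ℕ} (w t : Fin n → ℝ) : (w ⬝ᵥ t) ^ 2 ≤ (w ⬝ᵥ w) * (t ⬝ᵥ t) := by
  have h := real_inner_mul_inner_self_le ((WithLp.equiv 2 (Fin n → ℝ)).symm w)
    ((WithLp.equiv 2 (Fin n → ℝ)).symm t)
  simp only [EuclideanSpace.inner_eq_star_dotProduct, WithLp.equiv_symm_apply, WithLp.ofLp_toLp,
    star_trivial] at h
  simpa [pow_two, dotProduct_comm t w] using h

lemma aux_opnorm {p : ℕ} (A : Matrix (Fin p) (Fin p) ℝ) (v : Fin p → ℝ) :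
    v ⬝ᵥ (A *ᵥ v) ≤ ‖A‖ * (v ⬝ᵥ v) := by
  set v' : EuclideanSpace ℝ (Fin p) := (WithLp.equiv 2 _).symm v with hv'
  set y' : EuclideanSpace ℝ (Fin p) := (WithLp.equiv 2 _).symm (A *ᵥ v) with hy'
  have h1 : v ⬝ᵥ (A *ᵥ v) = ⟪v', y'⟫ := by
    rw [hv', hy', EuclideanSpace.inner_eq_star_dotProduct]; simp [dotProduct_comm]
  have h2 : ⟪v', y'⟫ ≤ ‖v'‖ * ‖y'‖ := real_inner_le_norm _ _
  have h3 : ‖y'‖ ≤ ‖A‖ * ‖v'‖ := A.l2_opNorm_mulVec v'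
  have h4 : ‖v'‖ * ‖v'‖ = v ⬝ᵥ v := by
    rw [← real_inner_self_eq_norm_mul_norm, hv', EuclideanSpace.inner_eq_star_dotProduct]; simp
  nlinarith [norm_nonneg v', norm_nonneg y', norm_nonneg A]

lemma aux_rayleigh {n : ℕ} {S : Matrix (Fin n) (Fin n) ℝ} (hS : S.IsHermitian)
    {lam : ℝ} (hlam : ∀ i, lam ≤ hS.eigenvalues i) (w : Fin n → ℝ) :
    lam * (w ⬝ᵥ w) ≤ w ⬝ᵥ (S *ᵥ w) := by
  set U : Matrix (Fin n) (Fin n) ℝ := (hS.eigenvectorUnitary : Matrix (Fin n) (Fin n) ℝ) with hUdef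
  have hU : U * star U = 1 := Matrix.mem_unitaryGroup_iff.mp hS.eigenvectorUnitary.2
  have key : S - lam • 1 = U * diagonal (fun i => hS.eigenvalues i - lam) * star U := by
    have h1 : (lam • (1 : Matrix (Fin n) (Fin n) ℝ)) = U * (lam • 1) * star U := by
      rw [Matrix.mul_smul, mul_one, Matrix.smul_mul, hU]
    conv_lhs => rw [hS.spectral_theorem, Unitary.conjStarAlgAut_apply, ← hUdef, h1]
    rw [← Matrix.sub_mul, ← Matrix.mul_sub]
    congr 2
    ext i j
    by_cases h : i = j <;>
      simp [h, diagonal_apply, Matrix.smul_apply, Matrix.one_apply]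
  have hP : (S - lam • 1).PosSemidef := by
    rw [key, Matrix.star_eq_conjTranspose U]
    exact (posSemidef_diagonal_iff.mpr fun i => sub_nonneg.2 (hlam i)).mul_mul_conjTranspose_same U
  have h2 := hP.dotProduct_mulVec_nonneg w
  simp only [star_trivial, Matrix.sub_mulVec, Matrix.smul_mulVec, Matrix.one_mulVec,
    dotProduct_sub, dotProduct_smul, smul_eq_mul] at h2
  linarith

lemma aux_scalar (lam N s c a b q r wSw : ℝ)
    (hlam0 : 0 ≤ lam) (hs : 0 ≤ s) (hN : 0 ≤ N) (hc0 : 0 ≤ c)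
    (h2c : 2 * c ≤ s) (hcN : c * (2 * N + s) ≤ s * lam)
    (ha : 0 ≤ a) (hb : 0 ≤ b) (hq : 0 ≤ q)
    (hr2 : r ^ 2 ≤ a * q)
    (hps : 0 ≤ 4 * N ^ 2 * a + 4 * N * s * r + s ^ 2 * q)
    (hw : lam * a ≤ wSw) (hqb : lam * q ≤ N * b) :
    c * ((a - 2 * r + q) + b) ≤ wSw + s * b := by
  rcases eq_or_lt_of_le hs with hs0 | hs0
  · have hc : c = 0 := le_antisymm (by linarith) hc0
    subst hc
    nlinarith [mul_nonneg hlam0 ha, mul_nonneg hs hb]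
  rcases eq_or_lt_of_le hN with hN0 | hN0
  · have hNe : N = 0 := hN0.symm
    subst hNe
    have hcl : c ≤ lam := by nlinarith
    rcases eq_or_lt_of_le hlam0 with hl0 | hl0
    · have hc : c = 0 := le_antisymm (by nlinarith) hc0
      subst hc
      nlinarith [mul_nonneg hlam0 ha, mul_nonneg hs hb]
    · have hq0 : q = 0 := le_antisymm (by nlinarith) hq
      have hr0 : r = 0 := by nlinarith [sq_nonneg r]
      nlinarith
  · have T1 : 0 ≤ 2 * N * a * (s * lam - c * (2 * N + s)) :=
      mul_nonneg (by positivity) (by linarith)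
    have T2 : 0 ≤ c * (4 * N ^ 2 * a + 4 * N * s * r + s ^ 2 * q) := mul_nonneg hc0 hps
    have T3 : 0 ≤ N * s * b * (s - 2 * c) := mul_nonneg (by positivity) (by linarith)
    have T4 : 0 ≤ s * q * (s * lam - c * (2 * N + s)) := mul_nonneg (by positivity) (by linarith)
    have T5 : 0 ≤ s ^ 2 * (N * b - lam * q) := mul_nonneg (by positivity) (by linarith)
    have T6 : 0 ≤ 2 * N * s * (wSw - lam * a) := mul_nonneg (by positivity) (by linarith)
    have key : 0 ≤ 2 * N * s * ((wSw + s * b) - c * ((a - 2 * r + q) + b)) := by nlinarith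
    have h2Ns : 0 < 2 * N * s := by positivity
    nlinarith

lemma realCT {m n' : Type*} (M : Matrix m n' ℝ) : Mᴴ = Mᵀ := by
  ext i j; simp [Matrix.conjTranspose_apply]

/-- The minimum eigenvalue of the block matrix `[[Σ, ΣKᵀ], [KΣ, KΣKᵀ + σ_u² I]]`
is at least `σ_u² · min{1/2, λ_min(Σ)/(2‖KΣKᵀ‖ + σ_u²)}`.  The statement
`λ_min(D) ≥ c` for the symmetric matrix `D` is expressed equivalently as
`D - c • I` being positive semidefinite; `λ_min(Σ)` is the infimum of the
eigenvalues of the Hermitian matrix `Σ`, and `‖·‖` is the `ℓ²` operator norm. -/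
theorem stmt_5 {n p : ℕ} (S : Matrix (Fin n) (Fin n) ℝ)
    (K : Matrix (Fin p) (Fin n) ℝ) (σu : ℝ) (hS : S.PosDef) :
    (Matrix.fromBlocks S (S * Kᵀ) (K * S)
        (K * S * Kᵀ + σu ^ 2 • (1 : Matrix (Fin p) (Fin p) ℝ)) -
      (σu ^ 2 * min (1 / 2)
          ((⨅ i, hS.1.eigenvalues i) / (2 * ‖K * S * Kᵀ‖ + σu ^ 2))) •
        (1 : Matrix (Fin n ⊕ Fin p) (Fin n ⊕ Fin p) ℝ)).PosSemidef := by
  set lam : ℝ := ⨅ i, hS.1.eigenvalues i with hlamdef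
  set Nn : ℝ := ‖K * S * Kᵀ‖ with hNdef
  set s : ℝ := σu ^ 2 with hsdef
  set c : ℝ := s * min (1 / 2) (lam / (2 * Nn + s)) with hcdef
  have hlam_le : ∀ i, lam ≤ hS.1.eigenvalues i := fun i =>
    ciInf_le (Finite.bddBelow_range _) i
  have hlam0 : 0 ≤ lam := Real.iInf_nonneg fun i => (hS.eigenvalues_pos i).le
  have hs0 : (0 : ℝ) ≤ s := sq_nonneg σu
  have hN0 : (0 : ℝ) ≤ Nn := norm_nonneg _
  have hc0 : 0 ≤ c :=
    mul_nonneg hs0 (le_min (by norm_num) (div_nonneg hlam0 (by positivity)))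
  have h2c : 2 * c ≤ s := by
    have h := min_le_left (1 / 2 : ℝ) (lam / (2 * Nn + s))
    nlinarith
  have hcN : c * (2 * Nn + s) ≤ s * lam := by
    rcases eq_or_lt_of_le (by positivity : (0:ℝ) ≤ 2 * Nn + s) with h0 | h0
    · rw [← h0, mul_zero]
      positivity
    · have h := min_le_right (1 / 2 : ℝ) (lam / (2 * Nn + s))
      have h2 : c ≤ s * (lam / (2 * Nn + s)) := mul_le_mul_of_nonneg_left h hs0
      have h3 : s * (lam / (2 * Nn + s)) * (2 * Nn + s) = s * lam := by
        field_simp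
      nlinarith
  have hSt : Sᵀ = S := by rw [← realCT]; exact hS.1
  refine Matrix.PosSemidef.of_dotProduct_mulVec_nonneg ?_ ?_
  · -- Hermitian
    apply Matrix.IsHermitian.sub
    · apply Matrix.IsHermitian.fromBlocks hS.1
      · rw [realCT, transpose_mul, transpose_transpose, hSt]
      · apply Matrix.IsHermitian.add
        · rw [Matrix.IsHermitian, realCT, transpose_mul, transpose_mul,
            transpose_transpose, hSt, ← Matrix.mul_assoc]
        · rw [Matrix.IsHermitian, realCT, transpose_smul, transpose_one]
    · rw [Matrix.IsHermitian, realCT, transpose_smul, transpose_one]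
  · -- quadratic form
    intro x
    set u : Fin n → ℝ := x ∘ Sum.inl with hu
    set v : Fin p → ℝ := x ∘ Sum.inr with hv
    have hx : x = Sum.elim u v := (Sum.elim_comp_inl_inr x).symm
    set t : Fin n → ℝ := Kᵀ *ᵥ v with ht
    set w : Fin n → ℝ := u + t with hw
    have hKdot : ∀ y : Fin n → ℝ, v ⬝ᵥ (K *ᵥ y) = t ⬝ᵥ y := fun y => by
      rw [dotProduct_mulVec, ht, mulVec_transpose]
    have hsym : ∀ y z : Fin n → ℝ, y ⬝ᵥ (S *ᵥ z) = z ⬝ᵥ (S *ᵥ y) := fun y z => by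
      rw [dotProduct_mulVec, ← mulVec_transpose, hSt, dotProduct_comm]
    have hquad : x ⬝ᵥ ((Matrix.fromBlocks S (S * Kᵀ) (K * S)
          (K * S * Kᵀ + s • (1 : Matrix (Fin p) (Fin p) ℝ))) *ᵥ x)
        = w ⬝ᵥ (S *ᵥ w) + s * (v ⬝ᵥ v) := by
      rw [hx, fromBlocks_mulVec, sumElim_dotProduct_sumElim]
      simp only [Sum.elim_comp_inl, Sum.elim_comp_inr, Matrix.add_mulVec,
        Matrix.smul_mulVec, Matrix.one_mulVec, ← Matrix.mulVec_mulVec,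
        dotProduct_add, dotProduct_smul, smul_eq_mul, hKdot]
      rw [hw, Matrix.mulVec_add, dotProduct_add, add_dotProduct, add_dotProduct, ← ht]
      ring
    have hdot : x ⬝ᵥ x = u ⬝ᵥ u + v ⬝ᵥ v := by
      rw [hx, sumElim_dotProduct_sumElim]
    have huu : u ⬝ᵥ u = w ⬝ᵥ w - 2 * (w ⬝ᵥ t) + t ⬝ᵥ t := by
      have : u = w - t := by rw [hw]; abel
      rw [this, sub_dotProduct, dotProduct_sub, dotProduct_sub, dotProduct_comm t w]
      ring
    have hps : 0 ≤ 4 * Nn ^ 2 * (w ⬝ᵥ w) + 4 * Nn * s * (w ⬝ᵥ t) + s ^ 2 * (t ⬝ᵥ t) := by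
      have h := aux_dot_self_nonneg ((2 * Nn) • w + s • t)
      simp only [add_dotProduct, dotProduct_add, smul_dotProduct, dotProduct_smul,
        smul_eq_mul, dotProduct_comm t w] at h
      nlinarith
    have hqb : lam * (t ⬝ᵥ t) ≤ Nn * (v ⬝ᵥ v) := by
      have h1 := aux_rayleigh hS.1 hlam_le t
      have h2 : t ⬝ᵥ (S *ᵥ t) = v ⬝ᵥ ((K * S * Kᵀ) *ᵥ v) := by
        rw [show (K * S * Kᵀ : Matrix (Fin p) (Fin p) ℝ) *ᵥ v = K *ᵥ (S *ᵥ (Kᵀ *ᵥ v)) from by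
          rw [mulVec_mulVec, mulVec_mulVec], hKdot, ht]
      have h3 := aux_opnorm (K * S * Kᵀ) v
      rw [← hNdef] at h3
      linarith
    have hkey := aux_scalar lam Nn s c (w ⬝ᵥ w) (v ⬝ᵥ v) (t ⬝ᵥ t) (w ⬝ᵥ t) (w ⬝ᵥ (S *ᵥ w))
      hlam0 hs0 hN0 hc0 h2c hcN (aux_dot_self_nonneg w) (aux_dot_self_nonneg v)
      (aux_dot_self_nonneg t) (aux_cs w t) hps (aux_rayleigh hS.1 hlam_le w) hqb
    rw [star_trivial, Matrix.sub_mulVec, Matrix.smul_mulVec, Matrix.one_mulVec,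
      dotProduct_sub, dotProduct_smul, smul_eq_mul, hquad, hdot, huu]
    linarith
end

section
/- Let M be an n×n real matrix and N an n×n positive definite matrix, and let T be a positive integer. Define the nT×nT block matrix D(T) with blocks D(T)_{ij} (1 ≤ i,j ≤ T) given by: D_{ij} = (Mᵀ)^{j−i} S_{T−j} if i < j, D_{jj} = S_{T−j}, and D_{ij} = S_{T−i} M^{i−j} if i > j, where S_m = Σ_{k=0}^{m} (Mᵀ)^k N M^k. Then D(T) is positive definite. -/
open Matrix

/-- `lyapPartialSum M N m = Σ_{k=0}^{m} (Mᵀ)^k N M^k`. -/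
noncomputable def lyapPartialSum {n : ℕ} (M N : Matrix (Fin n) (Fin n) ℝ)
    (m : ℕ) : Matrix (Fin n) (Fin n) ℝ :=
  ∑ k ∈ Finset.range (m + 1), (Mᵀ) ^ k * N * M ^ k

private lemma sum_ite_ge {α : Type*} [AddCommMonoid α] (T j : ℕ) (f : ℕ → α) :
    (∑ k ∈ Finset.range T, if j ≤ k then f k else 0) = ∑ l ∈ Finset.range (T - j), f (j + l) := by
  rw [← Finset.sum_filter]
  have : (Finset.range T).filter (fun k => j ≤ k) = Finset.Ico j T := by
    ext k; simp [Finset.mem_Ico]; omega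
  rw [this, Finset.sum_Ico_eq_sum_range]

private lemma block_eq {n : ℕ} (M N : Matrix (Fin n) (Fin n) ℝ) (T i j : ℕ)
    (hi : i < T) (hj : j < T) :
    (if i < j then (Mᵀ) ^ (j - i) * lyapPartialSum M N (T - 1 - j)
      else if i = j then lyapPartialSum M N (T - 1 - j)
      else lyapPartialSum M N (T - 1 - i) * M ^ (i - j))
    = ∑ k ∈ Finset.range T,
        if i ≤ k ∧ j ≤ k then (Mᵀ) ^ (k - i) * N * M ^ (k - j) else 0 := by
  rcases le_or_gt i j with hij | hij
  · have hcond : ∀ k, (i ≤ k ∧ j ≤ k) = (j ≤ k) := fun k => by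
      simp only [eq_iff_iff]; omega
    simp only [hcond]
    rw [sum_ite_ge]
    have hL : (if i < j then (Mᵀ) ^ (j - i) * lyapPartialSum M N (T - 1 - j)
        else if i = j then lyapPartialSum M N (T - 1 - j)
        else lyapPartialSum M N (T - 1 - i) * M ^ (i - j))
        = (Mᵀ) ^ (j - i) * lyapPartialSum M N (T - 1 - j) := by
      rcases eq_or_lt_of_le hij with h | h
      · simp [h]
      · simp [h, Nat.ne_of_lt h]
    rw [hL]
    unfold lyapPartialSum
    have : T - 1 - j + 1 = T - j := by omega
    rw [this, Finset.mul_sum]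
    refine Finset.sum_congr rfl fun l _ => ?_
    rw [← mul_assoc, ← mul_assoc, ← pow_add]
    have e1 : j - i + l = j + l - i := by omega
    have e2 : l = j + l - j := by omega
    rw [e1]; nth_rewrite 2 [e2]; rfl
  · have hcond : ∀ k, (i ≤ k ∧ j ≤ k) = (i ≤ k) := fun k => by
      simp only [eq_iff_iff]; omega
    simp only [hcond]
    rw [sum_ite_ge]
    have hL : (if i < j then (Mᵀ) ^ (j - i) * lyapPartialSum M N (T - 1 - j)
        else if i = j then lyapPartialSum M N (T - 1 - j)
        else lyapPartialSum M N (T - 1 - i) * M ^ (i - j))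
        = lyapPartialSum M N (T - 1 - i) * M ^ (i - j) := by
      simp [Nat.not_lt.mpr hij.le, Nat.ne_of_gt hij]
    rw [hL]
    unfold lyapPartialSum
    have : T - 1 - i + 1 = T - i := by omega
    rw [this, Finset.sum_mul]
    refine Finset.sum_congr rfl fun l _ => ?_
    rw [mul_assoc, ← pow_add]
    have e1 : l + (i - j) = i + l - j := by omega
    have e2 : l = i + l - i := by omega
    rw [e1]; nth_rewrite 1 [e2]
    rw [Nat.add_sub_cancel_left]

/-- The `nT × nT` block matrix `D(T)` with blocks (for 1-based block indices
`i, j`, here represented 0-based) `D_{ij} = (Mᵀ)^{j−i} S_{T−j}` if `i < j`,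
`D_{jj} = S_{T−j}`, and `D_{ij} = S_{T−i} M^{i−j}` if `i > j`, where
`S_m = Σ_{k=0}^m (Mᵀ)^k N M^k`, is positive definite whenever `N ≻ 0`. -/
theorem stmt_11 {n : ℕ} (T : ℕ) (hT : 0 < T)
    (M N : Matrix (Fin n) (Fin n) ℝ) (hN : N.PosDef) :
    (Matrix.of (fun (pq : Fin T × Fin n) (rs : Fin T × Fin n) =>
      (if (pq.1 : ℕ) < (rs.1 : ℕ) then
          (Mᵀ) ^ ((rs.1 : ℕ) - (pq.1 : ℕ)) * lyapPartialSum M N (T - 1 - (rs.1 : ℕ))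
        else if (pq.1 : ℕ) = (rs.1 : ℕ) then lyapPartialSum M N (T - 1 - (rs.1 : ℕ))
        else lyapPartialSum M N (T - 1 - (pq.1 : ℕ)) * M ^ ((pq.1 : ℕ) - (rs.1 : ℕ)))
        pq.2 rs.2)).PosDef := by
  set A : Matrix (Fin T × Fin n) (Fin T × Fin n) ℝ :=
    Matrix.of fun (kq jp : Fin T × Fin n) =>
      if (jp.1 : ℕ) ≤ (kq.1 : ℕ) then (M ^ ((kq.1 : ℕ) - (jp.1 : ℕ))) kq.2 jp.2 else 0 with hA
  set B : Matrix (Fin T × Fin n) (Fin T × Fin n) ℝ :=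
    Matrix.of fun (u v : Fin T × Fin n) => if u.1 = v.1 then N u.2 v.2 else 0 with hB
  -- factorization
  have factor : (Matrix.of (fun (pq : Fin T × Fin n) (rs : Fin T × Fin n) =>
      (if (pq.1 : ℕ) < (rs.1 : ℕ) then
          (Mᵀ) ^ ((rs.1 : ℕ) - (pq.1 : ℕ)) * lyapPartialSum M N (T - 1 - (rs.1 : ℕ))
        else if (pq.1 : ℕ) = (rs.1 : ℕ) then lyapPartialSum M N (T - 1 - (rs.1 : ℕ))
        else lyapPartialSum M N (T - 1 - (pq.1 : ℕ)) * M ^ ((pq.1 : ℕ) - (rs.1 : ℕ)))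
        pq.2 rs.2)) = Aᵀ * B * A := by
    ext ⟨i, q⟩ ⟨j, p⟩
    show (if (i : ℕ) < (j : ℕ) then
          (Mᵀ) ^ ((j : ℕ) - (i : ℕ)) * lyapPartialSum M N (T - 1 - (j : ℕ))
        else if (i : ℕ) = (j : ℕ) then lyapPartialSum M N (T - 1 - (j : ℕ))
        else lyapPartialSum M N (T - 1 - (i : ℕ)) * M ^ ((i : ℕ) - (j : ℕ))) q p
      = (Aᵀ * B * A) (i, q) (j, p)
    rw [block_eq M N T i j i.isLt j.isLt]
    have hent : ((∑ k ∈ Finset.range T,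
        if (i : ℕ) ≤ k ∧ (j : ℕ) ≤ k then (Mᵀ) ^ (k - (i : ℕ)) * N * M ^ (k - (j : ℕ)) else 0)) q p
        = ∑ k ∈ Finset.range T,
          if (i : ℕ) ≤ k ∧ (j : ℕ) ≤ k then ((Mᵀ) ^ (k - (i : ℕ)) * N * M ^ (k - (j : ℕ))) q p
          else 0 := by
      rw [Matrix.sum_apply]
      exact Finset.sum_congr rfl fun k _ => by split_ifs <;> simp
    rw [hent, ← Fin.sum_univ_eq_sum_range
      (fun k => if (i : ℕ) ≤ k ∧ (j : ℕ) ≤ k then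
        ((Mᵀ) ^ (k - (i : ℕ)) * N * M ^ (k - (j : ℕ))) q p else 0) T]
    symm
    simp only [hA, hB, Matrix.mul_apply, Matrix.transpose_apply, Matrix.of_apply,
      Fintype.sum_prod_type]
    simp only [ite_mul, zero_mul, mul_ite, mul_zero, Finset.sum_ite_irrel, Finset.sum_ite_eq,
      Finset.sum_ite_eq', Finset.mem_univ, if_true, Finset.sum_const_zero]
    refine Finset.sum_congr rfl fun k _ => ?_
    by_cases hj : (j : ℕ) ≤ (k : ℕ) <;> by_cases hi : (i : ℕ) ≤ (k : ℕ) <;>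
      simp [hi, hj, ← Matrix.transpose_pow, Matrix.transpose_apply, Finset.sum_ite_irrel,
        Finset.sum_const_zero]
  rw [factor]
  -- N is symmetric
  have hNt : Nᵀ = N := by
    have := hN.1
    rwa [Matrix.IsHermitian, conjTranspose_eq_transpose_of_trivial] at this
  -- B quadratic form
  have hBquad : ∀ z : Fin T × Fin n → ℝ,
      z ⬝ᵥ B *ᵥ z = ∑ k : Fin T, (fun q => z (k, q)) ⬝ᵥ N *ᵥ (fun q => z (k, q)) := by
    intro z
    simp only [dotProduct, mulVec, hB, Matrix.of_apply, Fintype.sum_prod_type]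
    simp only [dotProduct, ite_mul, zero_mul, Finset.sum_ite_irrel, Finset.sum_ite_eq,
      Finset.sum_ite_eq', Finset.mem_univ, if_true, Finset.sum_const_zero, Finset.mul_sum]
  rw [Matrix.posDef_iff_dotProduct_mulVec]
  constructor
  · -- Hermitian
    have hBH : B.IsHermitian := by
      ext ⟨k, q⟩ ⟨l, p⟩
      simp only [hB, Matrix.conjTranspose_apply, Matrix.of_apply, star_trivial]
      by_cases h : k = l
      · subst h
        simp only [if_pos rfl]
        exact congrFun (congrFun hNt q) p
      · rw [if_neg (fun h' => h h'.symm), if_neg h]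
    have : Aᴴ = Aᵀ := by
      ext u v; simp [Matrix.conjTranspose_apply, star_trivial]
    rw [← this]
    exact Matrix.isHermitian_conjTranspose_mul_mul A hBH
  · -- positivity
    intro x hx
    have hAx : A *ᵥ x ≠ 0 := by
      intro h0
      apply hx
      funext u
      obtain ⟨k, q⟩ := u
      -- strong induction on (k : ℕ)
      suffices H : ∀ m : ℕ, ∀ k : Fin T, (k : ℕ) = m → ∀ q : Fin n, x (k, q) = 0 by
        exact H (k : ℕ) k rfl q
      intro m
      induction m using Nat.strong_induction_on with
      | _ m IH =>
        intro k hk q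
        have hrow : (A *ᵥ x) (k, q) = 0 := by rw [h0]; rfl
        rw [Matrix.mulVec, dotProduct] at hrow
        rw [Fintype.sum_prod_type] at hrow
        have hsplit : (∑ j : Fin T, ∑ p : Fin n, A (k, q) (j, p) * x (j, p))
            = ∑ p : Fin n, A (k, q) (k, p) * x (k, p)
              + ∑ j ∈ Finset.univ.erase k, ∑ p : Fin n, A (k, q) (j, p) * x (j, p) := by
          rw [← Finset.add_sum_erase _ _ (Finset.mem_univ k)]
        have hrest : ∑ j ∈ Finset.univ.erase k, ∑ p : Fin n, A (k, q) (j, p) * x (j, p) = 0 := by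
          refine Finset.sum_eq_zero fun j hj => ?_
          have hjk : j ≠ k := Finset.ne_of_mem_erase hj
          rcases lt_or_ge (j : ℕ) (k : ℕ) with h | h
          · refine Finset.sum_eq_zero fun p _ => ?_
            rw [IH (j : ℕ) (by omega) j rfl p, mul_zero]
          · have hne : (j : ℕ) ≠ (k : ℕ) := fun e => hjk (Fin.ext e)
            have hjk' : ¬ ((j : ℕ) ≤ (k : ℕ)) := by omega
            refine Finset.sum_eq_zero fun p _ => ?_
            have hz : A (k, q) (j, p) = 0 := by
              rw [hA]
              simp only [Matrix.of_apply]
              exact if_neg hjk'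
            rw [hz, zero_mul]
        have hdiag : ∑ p : Fin n, A (k, q) (k, p) * x (k, p) = x (k, q) := by
          have : ∀ p, A (k, q) (k, p) = (1 : Matrix (Fin n) (Fin n) ℝ) q p := by
            intro p; simp [hA, pow_zero]
          simp only [this]
          simp [Matrix.one_apply, ite_mul, zero_mul, Finset.sum_ite_eq', Finset.mem_univ]
        rw [hsplit, hrest, add_zero, hdiag] at hrow
        exact hrow
    -- quadratic form
    have hstar : star x = x := by funext u; exact star_trivial _
    rw [hstar, ← Matrix.mulVec_mulVec, ← Matrix.mulVec_mulVec, Matrix.dotProduct_mulVec,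
      Matrix.vecMul_transpose]
    rw [hBquad (A *ᵥ x)]
    have hnn : ∀ k : Fin T,
        0 ≤ (fun q => (A *ᵥ x) (k, q)) ⬝ᵥ N *ᵥ (fun q => (A *ᵥ x) (k, q)) := by
      intro k
      have := hN.posSemidef.dotProduct_mulVec_nonneg (fun q => (A *ᵥ x) (k, q))
      simpa using this
    obtain ⟨u, hu⟩ : ∃ u, (A *ᵥ x) u ≠ 0 := by
      by_contra hcon
      push_neg at hcon
      exact hAx (funext hcon)
    obtain ⟨k₀, q₀⟩ := u
    have hzk : (fun q => (A *ᵥ x) (k₀, q)) ≠ 0 := by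
      intro hzz
      exact hu (congrFun hzz q₀)
    have hpos : 0 < (fun q => (A *ᵥ x) (k₀, q)) ⬝ᵥ N *ᵥ (fun q => (A *ᵥ x) (k₀, q)) := by
      have := hN.dotProduct_mulVec_pos hzk
      simpa using this
    exact Finset.sum_pos' (fun k _ => hnn k) ⟨k₀, Finset.mem_univ _, hpos⟩
end

section
/- Let M ∈ ℝ^{n×n}, P ∈ ℝ^{n×n} symmetric positive definite, and suppose P satisfies the Lyapunov equation P = MᵀPM + N for some positive definite N. Then for any positive integer T, the nT×nT block matrix G with blocks G_{ij} = (Mᵀ)^{j−i} P for i ≤ j and G_{ij} = P M^{i−j} for i > j is positive semidefinite. -/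
open Matrix

section Aux

variable {n : ℕ}

private lemma sum_dotProduct' {ι : Type*} (s : Finset ι) (f : ι → Fin n → ℝ)
    (w : Fin n → ℝ) : (∑ i ∈ s, f i) ⬝ᵥ w = ∑ i ∈ s, f i ⬝ᵥ w := by
  classical
  induction s using Finset.induction with
  | empty => simp
  | insert _ _ h ih => simp [Finset.sum_insert h, add_dotProduct, ih]

private lemma dotProduct_sum' {ι : Type*} (s : Finset ι) (f : ι → Fin n → ℝ)
    (w : Fin n → ℝ) : w ⬝ᵥ (∑ i ∈ s, f i) = ∑ i ∈ s, w ⬝ᵥ f i := by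
  classical
  induction s using Finset.induction with
  | empty => simp
  | insert _ _ h ih => simp [Finset.sum_insert h, dotProduct_add, ih]

private lemma mulVec_sum' {ι : Type*} (A : Matrix (Fin n) (Fin n) ℝ) (s : Finset ι)
    (f : ι → Fin n → ℝ) : A *ᵥ (∑ i ∈ s, f i) = ∑ i ∈ s, A *ᵥ f i := by
  classical
  induction s using Finset.induction with
  | empty => simp
  | insert _ _ h ih => simp [Finset.sum_insert h, Matrix.mulVec_add, ih]

/-- transpose trick for dot products over ℝ -/
private lemma dot_transpose (A : Matrix (Fin n) (Fin n) ℝ) (v w : Fin n → ℝ) :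
    v ⬝ᵥ (Aᵀ *ᵥ w) = (A *ᵥ v) ⬝ᵥ w := by
  rw [Matrix.dotProduct_mulVec, Matrix.vecMul_transpose]

/-- The state sequence `y 0 = u 0`, `y (j+1) = M y j + u (j+1)`. -/
private def Yseq (M : Matrix (Fin n) (Fin n) ℝ) (u : ℕ → Fin n → ℝ) : ℕ → Fin n → ℝ
  | 0 => u 0
  | (j+1) => M *ᵥ Yseq M u j + u (j+1)

/-- The quadratic-form summand. -/
private def Fq (M P : Matrix (Fin n) (Fin n) ℝ) (u : ℕ → Fin n → ℝ) (i j : ℕ) : ℝ :=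
  (u i) ⬝ᵥ ((if i ≤ j then (Mᵀ) ^ (j - i) * P else P * M ^ (i - j)) *ᵥ u j)

private lemma Yseq_sum (M : Matrix (Fin n) (Fin n) ℝ) (u : ℕ → Fin n → ℝ) (j : ℕ) :
    Yseq M u j = ∑ i ∈ Finset.range (j+1), (M ^ (j - i)) *ᵥ u i := by
  induction j with
  | zero => simp [Yseq]
  | succ j ih =>
    rw [Yseq, ih, Finset.sum_range_succ (fun i => (M ^ (j+1-i)) *ᵥ u i)]
    simp only [Nat.sub_self, pow_zero, Matrix.one_mulVec]
    congr 1
    rw [mulVec_sum']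
    refine Finset.sum_congr rfl fun i hi => ?_
    rw [Finset.mem_range] at hi
    have hji : j + 1 - i = (j - i) + 1 := by omega
    rw [Matrix.mulVec_mulVec, hji, pow_succ']

private lemma M_Yseq (M : Matrix (Fin n) (Fin n) ℝ) (u : ℕ → Fin n → ℝ) (t : ℕ) :
    M *ᵥ Yseq M u t = ∑ i ∈ Finset.range (t+1), (M ^ (t + 1 - i)) *ᵥ u i := by
  rw [Yseq_sum, mulVec_sum']
  refine Finset.sum_congr rfl fun i hi => ?_
  rw [Finset.mem_range] at hi
  have hti : t + 1 - i = (t - i) + 1 := by omega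
  rw [Matrix.mulVec_mulVec, hti, pow_succ']

private lemma key_identity (M P N : Matrix (Fin n) (Fin n) ℝ)
    (hLyap : P = Mᵀ * P * M + N) (u : ℕ → Fin n → ℝ) (t : ℕ) :
    ∑ i ∈ Finset.range (t+1), ∑ j ∈ Finset.range (t+1), Fq M P u i j
    = ∑ j ∈ Finset.range t, (Yseq M u j) ⬝ᵥ (N *ᵥ Yseq M u j)
      + (Yseq M u t) ⬝ᵥ (P *ᵥ Yseq M u t) := by
  induction t with
  | zero => simp [Yseq, Fq]
  | succ t ih =>
    have hcross1 : ∑ i ∈ Finset.range (t+1), Fq M P u i (t+1)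
        = (M *ᵥ Yseq M u t) ⬝ᵥ (P *ᵥ u (t+1)) := by
      rw [M_Yseq, sum_dotProduct']
      refine Finset.sum_congr rfl fun i hi => ?_
      rw [Finset.mem_range] at hi
      rw [Fq, if_pos (by omega), ← Matrix.mulVec_mulVec, ← Matrix.transpose_pow,
        dot_transpose]
    have hcross2 : ∑ j ∈ Finset.range (t+1), Fq M P u (t+1) j
        = (u (t+1)) ⬝ᵥ (P *ᵥ (M *ᵥ Yseq M u t)) := by
      rw [M_Yseq, mulVec_sum', dotProduct_sum']
      refine Finset.sum_congr rfl fun j hj => ?_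
      rw [Finset.mem_range] at hj
      rw [Fq, if_neg (by omega), ← Matrix.mulVec_mulVec]
    have hMPM : Mᵀ * P * M = P - N := by
      rw [eq_sub_iff_add_eq]; exact hLyap.symm
    have hdiag : Fq M P u (t+1) (t+1) = (u (t+1)) ⬝ᵥ (P *ᵥ u (t+1)) := by
      rw [Fq, if_pos le_rfl, Nat.sub_self, pow_zero, one_mul]
    have hexp : (Yseq M u (t+1)) ⬝ᵥ (P *ᵥ Yseq M u (t+1))
        = (Yseq M u t) ⬝ᵥ (P *ᵥ Yseq M u t) - (Yseq M u t) ⬝ᵥ (N *ᵥ Yseq M u t)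
          + (M *ᵥ Yseq M u t) ⬝ᵥ (P *ᵥ u (t+1))
          + (u (t+1)) ⬝ᵥ (P *ᵥ (M *ᵥ Yseq M u t))
          + (u (t+1)) ⬝ᵥ (P *ᵥ u (t+1)) := by
      have hMyPMy : (M *ᵥ Yseq M u t) ⬝ᵥ (P *ᵥ (M *ᵥ Yseq M u t))
          = (Yseq M u t) ⬝ᵥ (P *ᵥ Yseq M u t) - (Yseq M u t) ⬝ᵥ (N *ᵥ Yseq M u t) := by
        have h1 : (M *ᵥ Yseq M u t) ⬝ᵥ (P *ᵥ (M *ᵥ Yseq M u t))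
            = (Yseq M u t) ⬝ᵥ ((Mᵀ * P * M) *ᵥ Yseq M u t) := by
          rw [← Matrix.mulVec_mulVec, ← Matrix.mulVec_mulVec, dot_transpose,
            Matrix.mulVec_mulVec]
        rw [h1, hMPM, Matrix.sub_mulVec, dotProduct_sub]
      rw [show Yseq M u (t+1) = M *ᵥ Yseq M u t + u (t+1) from rfl]
      rw [Matrix.mulVec_add, dotProduct_add, add_dotProduct,
        add_dotProduct, hMyPMy]
      ring
    have hinner : ∀ i ∈ Finset.range (t+1),
        ∑ j ∈ Finset.range (t+1+1), Fq M P u i j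
        = ∑ j ∈ Finset.range (t+1), Fq M P u i j + Fq M P u i (t+1) :=
      fun i _ => Finset.sum_range_succ _ _
    rw [Finset.sum_range_succ (fun i => ∑ j ∈ Finset.range (t+1+1), Fq M P u i j) (t+1),
      Finset.sum_range_succ (Fq M P u (t+1)) (t+1),
      Finset.sum_congr rfl hinner, Finset.sum_add_distrib, ih, hcross1, hcross2,
      hdiag, Finset.sum_range_succ _ t, hexp]
    ring

end Aux

/-- If `P ≻ 0` is symmetric and satisfies the Lyapunov equation
`P = MᵀPM + N` with `N ≻ 0`, then for any positive integer `T` the `nT × nT`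
block matrix `G` with blocks `G_{ij} = (Mᵀ)^{j−i} P` for `i ≤ j` and
`G_{ij} = P M^{i−j}` for `i > j` is positive semidefinite. -/
theorem stmt_12 {n : ℕ} (T : ℕ) (hT : 0 < T)
    (M P N : Matrix (Fin n) (Fin n) ℝ) (hPsym : Pᵀ = P) (hP : P.PosDef)
    (hN : N.PosDef) (hLyap : P = Mᵀ * P * M + N) :
    (Matrix.of (fun (pq : Fin T × Fin n) (rs : Fin T × Fin n) =>
      (if (pq.1 : ℕ) ≤ (rs.1 : ℕ) then (Mᵀ) ^ ((rs.1 : ℕ) - (pq.1 : ℕ)) * P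
        else P * M ^ ((pq.1 : ℕ) - (rs.1 : ℕ))) pq.2 rs.2)).PosSemidef := by
  have hBT : ∀ i j : ℕ,
      ((if i ≤ j then (Mᵀ) ^ (j - i) * P else P * M ^ (i - j)) :
        Matrix (Fin n) (Fin n) ℝ)ᵀ
      = (if j ≤ i then (Mᵀ) ^ (i - j) * P else P * M ^ (j - i)) := by
    intro i j
    rcases lt_trichotomy i j with h | h | h
    · rw [if_pos h.le, if_neg (by omega), Matrix.transpose_mul, Matrix.transpose_pow,
        Matrix.transpose_transpose, hPsym]
    · subst h; simp [hPsym]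
    · rw [if_neg (by omega), if_pos h.le, Matrix.transpose_mul, Matrix.transpose_pow, hPsym]
  rw [Matrix.posSemidef_iff_dotProduct_mulVec]
  constructor
  · -- Hermitian
    ext ⟨p, q⟩ ⟨r, s⟩
    simp only [Matrix.conjTranspose_apply, Matrix.of_apply, star_trivial]
    have := congrFun (congrFun (hBT (r : ℕ) (p : ℕ)) q) s
    rw [Matrix.transpose_apply] at this
    rw [this]
  · intro x
    have hx : star x = x := star_trivial x
    rw [hx]
    classical
    set u : ℕ → Fin n → ℝ := fun i k => if h : i < T then x (⟨i, h⟩, k) else 0 with hu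
    have hquad : x ⬝ᵥ ((Matrix.of (fun (pq : Fin T × Fin n) (rs : Fin T × Fin n) =>
        (if (pq.1 : ℕ) ≤ (rs.1 : ℕ) then (Mᵀ) ^ ((rs.1 : ℕ) - (pq.1 : ℕ)) * P
          else P * M ^ ((pq.1 : ℕ) - (rs.1 : ℕ))) pq.2 rs.2)) *ᵥ x)
        = ∑ i ∈ Finset.range T, ∑ j ∈ Finset.range T, Fq M P u i j := by
      have hux : ∀ (i : Fin T), u (i:ℕ) = fun k => x (i, k) := fun i => by
        funext k; simp only [hu]; rw [dif_pos i.isLt]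
      rw [← Fin.sum_univ_eq_sum_range (fun i => ∑ j ∈ Finset.range T, Fq M P u i j) T]
      have hr : ∀ p : Fin T, (∑ j ∈ Finset.range T, Fq M P u (p:ℕ) j) = ∑ r : Fin T, Fq M P u (p:ℕ) (r:ℕ) := fun p => (Fin.sum_univ_eq_sum_range _ T).symm
      rw [Finset.sum_congr rfl fun p _ => hr p]
      simp only [Fq, hux, dotProduct, Matrix.mulVec, Matrix.of_apply, Fintype.sum_prod_type, Finset.mul_sum, Finset.sum_mul]
      exact Finset.sum_congr rfl fun p _ => Finset.sum_comm
    rw [hquad]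
    obtain ⟨t, rfl⟩ : ∃ t, T = t + 1 := ⟨T - 1, by omega⟩
    rw [key_identity M P N hLyap u t]
    have h1 : ∀ j, 0 ≤ (Yseq M u j) ⬝ᵥ (N *ᵥ Yseq M u j) := fun j => by
      simpa using hN.posSemidef.dotProduct_mulVec_nonneg (Yseq M u j)
    have h2 : 0 ≤ (Yseq M u t) ⬝ᵥ (P *ᵥ Yseq M u t) := by
      simpa using hP.posSemidef.dotProduct_mulVec_nonneg (Yseq M u t)
    exact add_nonneg (Finset.sum_nonneg fun j _ => h1 j) h2
end
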